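/- Let P and W be Π¹₁-wellfounded level-1 trees. Then the order type of (rep(P), <^P) is less than or equal to the order type of (rep(W), <^W) if and only if there exists a map σ that factors (P, W). -/

import Mathlib

noncomputable section

/-- Brouwer–Kleene strict order on finite sequences, relative to a strict order `lt`
on entries: `s <_BK t` iff `s` properly extends `t`, or at the least position where
both are defined and they differ, the entry of `s` is smaller; `[]` is greatest. -/
def BKltBy {α : Type*} (lt : α → α → Prop) : List α → List α → Prop
  | [], _ => False
  | _ :: _, [] => True
  | a :: s, b :: t => lt a b ∨ (a = b ∧ BKltBy lt s t)

/-- The Brouwer–Kleene order on finite sequences of natural numbers. -/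
def BKlt : List ℕ → List ℕ → Prop := BKltBy (· < ·)

/-- A level-1 tree: a set of nonempty finite sequences of naturals such that whenever
`s⌢(n) ∈ P`: if `s ≠ []` then `s ∈ P`, and `s⌢(m) ∈ P` for every `m < n`. -/
def IsLevel1Tree (P : Set (List ℕ)) : Prop :=
  (∀ s ∈ P, s ≠ []) ∧
  ∀ (s : List ℕ) (n : ℕ), s ++ [n] ∈ P →
    (s ≠ [] → s ∈ P) ∧ ∀ m < n, s ++ [m] ∈ P

/-- A level-1 tree is regular iff the sequence `(1)` is not in it. -/
def Regular1 (P : Set (List ℕ)) : Prop := ([1] : List ℕ) ∉ P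

/-- `P` is Π¹₁-wellfounded: there is no infinite branch through `P`. -/
def Pi11WF (P : Set (List ℕ)) : Prop :=
  ¬ ∃ x : ℕ → ℕ, ∀ n : ℕ, 0 < n → (List.ofFn fun i : Fin n => x i) ∈ P

/-- `rep(P)`: the pair `(p, none)` codes the element `(p)` and `(p, some n)` codes
`(p, n)`. -/
def Rep1 (P : Set (List ℕ)) : Set (List ℕ × Option ℕ) := {x | x.1 ∈ P}

def optNatLt : Option ℕ → Option ℕ → Prop
  | some n, some m => n < m
  | some _, none => True
  | _, _ => False

/-- The order `<^P` on `rep(P)`. -/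
def Rep1lt (x y : List ℕ × Option ℕ) : Prop :=
  BKlt x.1 y.1 ∨ (x.1 = y.1 ∧ optNatLt x.2 y.2)

/-- The first uncountable ordinal. -/
def omega1 : Ordinal := (Cardinal.aleph 1).ord

/-- The tuple `(f p)_{p ∈ P}` respects the level-1 tree `P`: each entry is a countable
limit ordinal and `p ↦ f p` is order preserving from `(P, <_BK)` to the ordinals. -/
def Respects1 (P : Set (List ℕ)) (f : List ℕ → Ordinal) : Prop :=
  (∀ p ∈ P, f p < omega1 ∧ Order.IsSuccLimit (f p)) ∧
  ∀ p ∈ P, ∀ q ∈ P, BKlt p q → f p < f q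

/-- `σ` factors `(P, W)`: `σ(∅) = ∅` and `σ` preserves the Brouwer–Kleene order. -/
def Factors (P W : Set (List ℕ)) (σ : List ℕ → List ℕ) : Prop :=
  σ [] = [] ∧ (∀ p ∈ P, σ p ∈ insert ([] : List ℕ) W) ∧
  ∀ s ∈ insert ([] : List ℕ) P, ∀ t ∈ insert ([] : List ℕ) P,
    BKlt s t → BKlt (σ s) (σ t)

/-- Partial level ≤1 tree `(P, t)`; `t = none` codes the value `-1`. -/
def IsPartialLevelLe1Tree (P : Set (List ℕ)) (t : Option (List ℕ)) : Prop :=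
  P.Finite ∧ IsLevel1Tree P ∧ Regular1 P ∧
  (match t with
   | none => P.Nonempty
   | some s => s ∉ P ∧ IsLevel1Tree (insert s P) ∧ Regular1 (insert s P))

/-- The tuple coded by `f` on `P` together with the value `v` at `t` respects the
partial level ≤1 tree `(P, t)`. -/
def RespectsP1 (P : Set (List ℕ)) (t : Option (List ℕ)) (f : List ℕ → Ordinal)
    (v : Ordinal) : Prop :=
  match t with
  | none => Respects1 P f ∧ v < Ordinal.omega0
  | some s => Respects1 P f ∧
      Respects1 (insert s P) (fun p => if p = s then v else f p)

/-- A level-2 tree of uniform cofinalities. -/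
structure Level2Tree where
  dom : Set (List (List ℕ))
  tr : List (List ℕ) → Set (List ℕ)
  nd : List (List ℕ) → Option (List ℕ)
  nil_mem : [] ∈ dom
  take_mem : ∀ q ∈ dom, ∀ n : ℕ, q.take n ∈ dom
  lvl1 : ∀ q ∈ dom, IsLevel1Tree {a : List ℕ | q ++ [a] ∈ dom}
  tr_nil : tr [] = ∅
  nd_nil : nd [] = some [0]
  ptree : ∀ q ∈ dom, IsPartialLevelLe1Tree (tr q) (nd q)
  compl : ∀ q ∈ dom, ∀ l : ℕ, l < q.length →
    ∃ s : List ℕ, nd (q.take l) = some s ∧ tr (q.take (l + 1)) = insert s (tr (q.take l))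

/-- The node `Q_node(q)`, read as an element of `ℕ^{<ω}`. -/
def Level2Tree.ndVal (Q : Level2Tree) (q : List (List ℕ)) : List ℕ := (Q.nd q).getD []

/-- The interleaved sequence `ᾱ ⊕ q`. -/
def Level2Tree.oplus (Q : Level2Tree) (f : List ℕ → Ordinal) (q : List (List ℕ)) :
    List (Ordinal × Option (List ℕ)) :=
  (List.range q.length).map fun i => (f (Q.ndVal (q.take i)), some (q.getD i []))

/-- The interleaved sequence `ᾱ ⊕ q⌢(-1)`, where `v` is the entry of the tuple at
the node `Q_node(q)`. -/
def Level2Tree.oplusNeg (Q : Level2Tree) (f : List ℕ → Ordinal) (v : Ordinal)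
    (q : List (List ℕ)) : List (Ordinal × Option (List ℕ)) :=
  Q.oplus f q ++ [(v, none)]

def optNodeLt : Option (List ℕ) → Option (List ℕ) → Prop
  | none, some _ => True
  | some s, some t => BKlt s t
  | _, _ => False

def entryLt (x y : Ordinal × Option (List ℕ)) : Prop :=
  x.1 < y.1 ∨ (x.1 = y.1 ∧ optNodeLt x.2 y.2)

/-- The order `<^{²Q}` on interleaved sequences. -/
def Rep2lt : List (Ordinal × Option (List ℕ)) → List (Ordinal × Option (List ℕ)) → Prop :=
  BKltBy entryLt

/-- `rep(²Q)`. -/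
def Level2Tree.rep (Q : Level2Tree) : Set (List (Ordinal × Option (List ℕ))) :=
  {x | (∃ q ∈ Q.dom, ∃ f, Respects1 (Q.tr q) f ∧ x = Q.oplus f q) ∨
       (∃ q ∈ Q.dom, ∃ f v, RespectsP1 (Q.tr q) (Q.nd q) f v ∧ x = Q.oplusNeg f v q)}

/-- Π¹₂-wellfoundedness of a level-2 tree. -/
def Level2Tree.Pi12WF (Q : Level2Tree) : Prop :=
  (∀ q ∈ Q.dom, Pi11WF {a : List ℕ | q ++ [a] ∈ Q.dom}) ∧
  ∀ y : ℕ → List ℕ, (∀ n : ℕ, (List.ofFn fun i : Fin n => y i) ∈ Q.dom) →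
    ¬ Pi11WF (⋃ n : ℕ, Q.tr (List.ofFn fun i : Fin n => y i))

/-- The type of elements of `rep(Q)` for a level ≤2 tree `Q`: `inl` for the level-1
part, `inr` for the level-2 part. -/
abbrev RepLe2Elt := (List ℕ × Option ℕ) ⊕ (List (Ordinal × Option (List ℕ)))

/-- `rep(Q)` for the level ≤2 tree `Q = (P, Q₂)`. -/
def RepLe2 (P : Set (List ℕ)) (Q : Level2Tree) : Set RepLe2Elt :=
  {x | match x with
       | Sum.inl a => a ∈ Rep1 P
       | Sum.inr b => b ∈ Q.rep}

/-- The order `<^Q` for a level ≤2 tree: the level-1 part comes first. -/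
def RepLe2lt : RepLe2Elt → RepLe2Elt → Prop := Sum.Lex Rep1lt Rep2lt

/-- Π¹₂-wellfoundedness of a level ≤2 tree. -/
def Pi12WFle2 (P : Set (List ℕ)) (Q : Level2Tree) : Prop :=
  Pi11WF P ∧ Q.Pi12WF

/-- The sequence of the first `n` values of `x`. -/
def prefixSeq {α : Type*} (x : ℕ → α) (n : ℕ) : List α := List.ofFn fun i : Fin n => x i

/-- `σ` is a winning strategy for Player I (who plays at even rounds) in the game
with payoff set `A`. -/
def WinningStratI (A : Set (ℕ → ℕ)) (σ : List ℕ → ℕ) : Prop :=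
  ∀ x : ℕ → ℕ, (∀ n, x (2 * n) = σ (prefixSeq x (2 * n))) → x ∈ A

/-- `σ` is a winning strategy for Player II (who plays at odd rounds). -/
def WinningStratII (A : Set (ℕ → ℕ)) (σ : List ℕ → ℕ) : Prop :=
  ∀ x : ℕ → ℕ, (∀ n, x (2 * n + 1) = σ (prefixSeq x (2 * n + 1))) → x ∉ A

/-- The Gale–Stewart game with payoff `A` is determined. -/
def GameDetermined (A : Set (ℕ → ℕ)) : Prop :=
  (∃ σ, WinningStratI A σ) ∨ (∃ σ, WinningStratII A σ)

/-- `A` is analytic: the projection of a closed subset of the plane of Baire space,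
i.e., the projection of the set of branches of a set of pairs of finite sequences. -/
def IsAnalytic (A : Set (ℕ → ℕ)) : Prop :=
  ∃ T : Set (List ℕ × List ℕ),
    A = {x | ∃ y : ℕ → ℕ, ∀ n : ℕ, (prefixSeq x n, prefixSeq y n) ∈ T}

/-- Boldface Π¹₁-determinacy: every game with coanalytic payoff is determined. -/
def BoldfacePi11Determinacy : Prop :=
  ∀ A : Set (ℕ → ℕ), IsAnalytic Aᶜ → GameDetermined A

/-- An infinite level-1 tower. -/
def IsInfLevel1Tower (P : ℕ → Set (List ℕ)) : Prop :=
  ∀ i : ℕ, IsLevel1Tree (P i) ∧ (P i).Finite ∧ (P i).ncard = i ∧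
    ∀ j : ℕ, i < j → P i ⊆ P j

/-- `o` is a limit point of the set of ordinals `E`. -/
def IsLimitPtOf (E : Set Ordinal) (o : Ordinal) : Prop :=
  (∃ e ∈ E, e < o) ∧ ∀ b < o, ∃ e ∈ E, b < e ∧ e < o

/-- `E` is a club in `ω₁`. -/
def IsClubInOmega1 (E : Set Ordinal) : Prop :=
  (∀ o ∈ E, o < omega1) ∧
  (∀ o < omega1, ∃ e ∈ E, o < e) ∧
  ∀ o < omega1, IsLimitPtOf E o → o ∈ E

/-- The tuple coded by `f` lies in `[E]^{P↑}`. -/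
def RespectsIn (E : Set Ordinal) (P : Set (List ℕ)) (f : List ℕ → Ordinal) : Prop :=
  Respects1 P f ∧ ∀ p ∈ P, f p ∈ E ∧ IsLimitPtOf E (f p)

/-- The tuple coded by `(f, v)` lies in `[E]^{(P,t)↑}`. -/
def RespectsPIn (E : Set Ordinal) (P : Set (List ℕ)) (t : Option (List ℕ))
    (f : List ℕ → Ordinal) (v : Ordinal) : Prop :=
  RespectsP1 P t f v ∧ (∀ p ∈ P, f p ∈ E ∧ IsLimitPtOf E (f p)) ∧
  (t ≠ none → v ∈ E)

/-- `rep(²Q) ↾ E`. -/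
def Level2Tree.repRestrict (Q : Level2Tree) (E : Set Ordinal) :
    Set (List (Ordinal × Option (List ℕ))) :=
  {x | (∃ q ∈ Q.dom, ∃ f, RespectsIn E (Q.tr q) f ∧ x = Q.oplus f q) ∨
       (∃ q ∈ Q.dom, ∃ f v, RespectsPIn E (Q.tr q) (Q.nd q) f v ∧ x = Q.oplusNeg f v q)}

/-- `rep(Q) ↾ E` for a level ≤2 tree `Q = (P, Q₂)`. -/
def RepLe2Restrict (P : Set (List ℕ)) (Q : Level2Tree) (E : Set Ordinal) :
    Set RepLe2Elt :=
  {x | match x with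
       | Sum.inl a => a ∈ Rep1 P
       | Sum.inr b => b ∈ Q.repRestrict E}

/-- `C` is a closed subset of `X` in the order topology of the strict linear order
`lt` on `X`: `C` contains all of its one-sided limit points in `X`. -/
def OrderClosedIn {σ : Type*} (lt : σ → σ → Prop) (X C : Set σ) : Prop :=
  (∀ v ∈ X, (∃ w ∈ C, lt w v) →
      (∀ w ∈ X, lt w v → ∃ u ∈ C, lt w u ∧ lt u v) → v ∈ C) ∧
  (∀ v ∈ X, (∃ w ∈ C, lt v w) →
      (∀ w ∈ X, lt v w → ∃ u ∈ C, lt v u ∧ lt u w) → v ∈ C)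

end

private lemma bk_irrefl : ∀ s : List ℕ, ¬ BKlt s s
  | [] => fun h => h.elim
  | a :: s => fun h => by
      rcases h with h | ⟨-, h⟩
      · exact lt_irrefl _ h
      · exact bk_irrefl s h

private lemma bk_asymm : ∀ s t : List ℕ, BKlt s t → BKlt t s → False
  | [], _, h, _ => h.elim
  | _ :: _, [], _, h' => h'.elim
  | a :: s, b :: t, h, h' => by
      rcases h with h | ⟨rfl, h⟩
      · rcases h' with h' | ⟨rfl, h'⟩
        · exact absurd h' (lt_asymm h)
        · exact lt_irrefl _ h
      · rcases h' with h' | ⟨-, h'⟩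
        · exact lt_irrefl _ h'
        · exact bk_asymm s t h h'

private lemma bk_nil_gt {s : List ℕ} (h : s ≠ []) : BKlt s [] := by
  cases s with
  | nil => exact absurd rfl h
  | cons a t => exact trivial

private lemma optNatLt_some {u v : Option ℕ} (h : optNatLt u v) : ∃ k, u = some k := by
  cases u with
  | none => exact h.elim
  | some k => exact ⟨k, rfl⟩

private lemma rep1lt_irrefl : ∀ x : List ℕ × Option ℕ, ¬ Rep1lt x x
  | (s, o), h => by
      rcases h with h | ⟨-, h⟩
      · exact bk_irrefl s h
      · cases o with
        | none => exact h
        | some k => exact lt_irrefl k h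

/-- For Π¹₁-wellfounded level-1 trees `P`, `W`, the order type of
`(rep(P), <^P)` is at most that of `(rep(W), <^W)` iff some `σ` factors `(P, W)`. -/
theorem stmt4 (P W : Set (List ℕ)) (hP : IsLevel1Tree P) (hW : IsLevel1Tree W)
    (hPwf : Pi11WF P) (hWwf : Pi11WF W)
    (h1 : IsWellOrder {x // x ∈ Rep1 P} (fun a b => Rep1lt a.1 b.1))
    (h2 : IsWellOrder {x // x ∈ Rep1 W} (fun a b => Rep1lt a.1 b.1)) :
    @Ordinal.type {x // x ∈ Rep1 P} (fun a b => Rep1lt a.1 b.1) h1 ≤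
      @Ordinal.type {x // x ∈ Rep1 W} (fun a b => Rep1lt a.1 b.1) h2 ↔
    ∃ σ : List ℕ → List ℕ, Factors P W σ := by
  haveI := h1; haveI := h2
  constructor
  · intro hle
    obtain ⟨e⟩ := Ordinal.type_le_iff'.mp hle
    have key : ∀ (p : List ℕ) (hp : p ∈ P) (q : List ℕ) (hq : q ∈ P), BKlt p q →
        BKlt (e ⟨(p, some 0), hp⟩).1.1 (e ⟨(q, some 0), hq⟩).1.1 := by
      intro p hp q hq hpq
      have h0 : Rep1lt (e ⟨(p, some 0), hp⟩).1 (e ⟨(q, some 0), hq⟩).1 :=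
        e.map_rel_iff.mpr (Or.inl hpq)
      rcases h0 with h0 | ⟨hw, hab⟩
      · exact h0
      exfalso
      have mid : ∀ x : List ℕ × Option ℕ, Rep1lt (e ⟨(p, some 0), hp⟩).1 x →
          Rep1lt x (e ⟨(q, some 0), hq⟩).1 → x.1 = (e ⟨(p, some 0), hp⟩).1.1 := by
        intro x hx1 hx2
        rcases hx1 with hx1 | ⟨hx1, -⟩
        · rw [hw] at hx1
          rcases hx2 with hx2 | ⟨hx2, -⟩
          · exact (bk_asymm _ _ hx2 hx1).elim
          · rw [← hx2] at hx1
            exact (bk_irrefl _ hx1).elim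
        · exact hx1.symm
      have hz : (e ⟨(p, none), hp⟩).1.1 = (e ⟨(p, some 0), hp⟩).1.1 :=
        mid _ ((e.map_rel_iff (a := ⟨(p, some 0), hp⟩)
            (b := ⟨(p, none), hp⟩)).mpr (Or.inr ⟨rfl, trivial⟩))
          ((e.map_rel_iff (a := ⟨(p, none), hp⟩)
            (b := ⟨(q, some 0), hq⟩)).mpr (Or.inl hpq))
      have hyn : ∀ n : ℕ, (e ⟨(p, some (n+1)), hp⟩).1.1 = (e ⟨(p, some 0), hp⟩).1.1 :=
        fun n => mid _ ((e.map_rel_iff (a := ⟨(p, some 0), hp⟩)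
            (b := ⟨(p, some (n+1)), hp⟩)).mpr (Or.inr ⟨rfl, Nat.succ_pos n⟩))
          ((e.map_rel_iff (a := ⟨(p, some (n+1)), hp⟩)
            (b := ⟨(q, some 0), hq⟩)).mpr (Or.inl hpq))
      have hcd : ∀ n : ℕ,
          optNatLt (e ⟨(p, some (n+1)), hp⟩).1.2 (e ⟨(p, none), hp⟩).1.2 := by
        intro n
        have h := (e.map_rel_iff (a := ⟨(p, some (n+1)), hp⟩)
          (b := ⟨(p, none), hp⟩)).mpr (Or.inr ⟨rfl, trivial⟩)
        rcases h with h | ⟨-, h⟩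
        · rw [hyn n, hz] at h
          exact (bk_irrefl _ h).elim
        · exact h
      have hdb : optNatLt (e ⟨(p, none), hp⟩).1.2 (e ⟨(q, some 0), hq⟩).1.2 := by
        have h := (e.map_rel_iff (a := ⟨(p, none), hp⟩)
          (b := ⟨(q, some 0), hq⟩)).mpr (Or.inl hpq)
        rcases h with h | ⟨-, h⟩
        · rw [hz, hw] at h
          exact (bk_irrefl _ h).elim
        · exact h
      have hcc : ∀ n : ℕ,
          optNatLt (e ⟨(p, some (n+1)), hp⟩).1.2 (e ⟨(p, some (n+1+1)), hp⟩).1.2 := by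
        intro n
        have h := (e.map_rel_iff (a := ⟨(p, some (n+1)), hp⟩)
          (b := ⟨(p, some (n+1+1)), hp⟩)).mpr (Or.inr ⟨rfl, Nat.lt_succ_self (n+1)⟩)
        rcases h with h | ⟨-, h⟩
        · rw [hyn n, hyn (n+1)] at h
          exact (bk_irrefl _ h).elim
        · exact h
      obtain ⟨d0, hd0⟩ := optNatLt_some hdb
      have hg : ∀ n, ∃ k, (e ⟨(p, some (n+1)), hp⟩).1.2 = some k :=
        fun n => optNatLt_some (hcd n)
      choose g hgk using hg
      have hmono : StrictMono g := strictMono_nat_of_lt_succ (by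
        intro n
        have h := hcc n
        rw [hgk n, hgk (n+1)] at h
        exact h)
      have hbd : ∀ n, g n < d0 := by
        intro n
        have h := hcd n
        rw [hgk n, hd0] at h
        exact h
      exact absurd (hbd d0) (not_lt.mpr hmono.le_apply)
    classical
    have hnilP : ([] : List ℕ) ∉ P := fun h => hP.1 [] h rfl
    refine ⟨fun s => if h : s ∈ P then (e ⟨(s, some 0), h⟩).1.1 else [], ?_, ?_, ?_⟩
    · exact dif_neg hnilP
    · intro p hp
      have h' : (fun s => if h : s ∈ P then (e ⟨(s, some 0), h⟩).1.1 else []) p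
          = (e ⟨(p, some 0), hp⟩).1.1 := dif_pos hp
      rw [h']
      exact Set.mem_insert_of_mem _ (e ⟨(p, some 0), hp⟩).2
    · intro s hs t ht hst
      rcases Set.mem_insert_iff.mp hs with rfl | hs
      · exact hst.elim
      have hs' : (fun s => if h : s ∈ P then (e ⟨(s, some 0), h⟩).1.1 else []) s
          = (e ⟨(s, some 0), hs⟩).1.1 := dif_pos hs
      rcases Set.mem_insert_iff.mp ht with rfl | ht
      · have ht' : (fun s => if h : s ∈ P then (e ⟨(s, some 0), h⟩).1.1 else [])
            ([] : List ℕ) = [] := dif_neg hnilP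
        rw [hs', ht']
        exact bk_nil_gt (hW.1 _ (e ⟨(s, some 0), hs⟩).2)
      · have ht' : (fun s => if h : s ∈ P then (e ⟨(s, some 0), h⟩).1.1 else []) t
            = (e ⟨(t, some 0), ht⟩).1.1 := dif_pos ht
        rw [hs', ht']
        exact key s hs t ht hst
  · rintro ⟨σ, hσ0, hσmem, hσord⟩
    have hσW : ∀ p ∈ P, σ p ∈ W := by
      intro p hp
      have hlt : BKlt (σ p) (σ []) :=
        hσord p (Set.mem_insert_of_mem _ hp) [] (Set.mem_insert _ _)
          (bk_nil_gt (hP.1 p hp))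
      rw [hσ0] at hlt
      rcases Set.mem_insert_iff.mp (hσmem p hp) with h | h
      · rw [h] at hlt
        exact hlt.elim
      · exact h
    refine Ordinal.type_le_iff'.mpr ⟨?_⟩
    have hmem' : ∀ x : {x // x ∈ Rep1 P}, (σ x.1.1, x.1.2) ∈ Rep1 W :=
      fun x => hσW x.1.1 x.2
    let f : {x // x ∈ Rep1 P} → {x // x ∈ Rep1 W} := fun x => ⟨(σ x.1.1, x.1.2), hmem' x⟩
    have hmono : ∀ x y : {x // x ∈ Rep1 P}, Rep1lt x.1 y.1 → Rep1lt (f x).1 (f y).1 := by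
      rintro x y (h | ⟨h, h2'⟩)
      · exact Or.inl (hσord _ (Set.mem_insert_of_mem _ x.2) _
          (Set.mem_insert_of_mem _ y.2) h)
      · exact Or.inr ⟨congrArg σ h, h2'⟩
    have hinj : Function.Injective f := by
      intro x y hxy
      rcases trichotomous_of (fun a b : {x // x ∈ Rep1 P} => Rep1lt a.1 b.1) x y with h | h | h
      · have h' := hmono x y h
        rw [hxy] at h'
        exact absurd h' (rep1lt_irrefl _)
      · exact h
      · have h' := hmono y x h
        rw [hxy] at h'
        exact absurd h' (rep1lt_irrefl _)
    refine ⟨⟨f, hinj⟩, ?_⟩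
    intro a b
    constructor
    · intro hab
      rcases trichotomous_of (fun a b : {x // x ∈ Rep1 P} => Rep1lt a.1 b.1) a b with h | h | h
      · exact h
      · subst h
        exact absurd hab (rep1lt_irrefl _)
      · have h' := hmono b a h
        exact absurd (trans_of (fun a b : {x // x ∈ Rep1 W} => Rep1lt a.1 b.1) hab h') (rep1lt_irrefl _)
    · exact hmono a b
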